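/- (Unsafe-trajectory case of Proposition 1.) If there exists k̄ ∈ {0, …, N} with x_{k̄} ∉ C, then every reward along the augmented trajectory vanishes, so the total return is zero: Σ_{k=0}^∞ r(S_k) = 0. -/
import Mathlib


open scoped Classical

/-- A pair `(h, y)` is absorbing iff `h < 0` or `y ∉ C`. -/
def IsAbsorbing {𝒳 : Type*} (C : Set 𝒳) (s : ℝ × 𝒳) : Prop :=
  s.1 < 0 ∨ s.2 ∉ C

/-- Reward: `1` if `0 ≤ h < Δt` and `(h, y)` is not absorbing, else `0`. -/
noncomputable def reward {𝒳 : Type*} (C : Set 𝒳) (Δt : ℝ) (s : ℝ × 𝒳) : ℝ :=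
  if 0 ≤ s.1 ∧ s.1 < Δt ∧ ¬ IsAbsorbing C s then 1 else 0

/-- The augmented trajectory built from a realized trajectory `x`. -/
noncomputable def augTraj {𝒳 : Type*} (C : Set 𝒳) (Δt τ : ℝ) (x : ℕ → 𝒳) : ℕ → ℝ × 𝒳
  | 0 => (τ, x 0)
  | k + 1 =>
      if IsAbsorbing C (augTraj C Δt τ x k) then augTraj C Δt τ x k
      else ((augTraj C Δt τ x k).1 - Δt, x (k + 1))

/-- Once absorbing, always absorbing. -/
lemma absorbing_mono {𝒳 : Type*} (C : Set 𝒳) (Δt τ : ℝ) (x : ℕ → 𝒳) :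
    ∀ j k : ℕ, j ≤ k → IsAbsorbing C (augTraj C Δt τ x j) →
      IsAbsorbing C (augTraj C Δt τ x k) := by
  intro j k hjk h
  induction k with
  | zero => simpa [Nat.le_zero.mp hjk] using h
  | succ n ih =>
    rcases hjk.lt_or_eq with h' | h'
    · have := ih (Nat.lt_succ_iff.mp h')
      simp [augTraj, this]
    · simpa [h'] using h

/-- While non-absorbing, the trajectory is explicit. -/
lemma augTraj_eq {𝒳 : Type*} (C : Set 𝒳) (Δt τ : ℝ) (x : ℕ → 𝒳) :
    ∀ k : ℕ, (∀ j < k, ¬ IsAbsorbing C (augTraj C Δt τ x j)) →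
      augTraj C Δt τ x k = (τ - k * Δt, x k) := by
  intro k
  induction k with
  | zero => intro _; simp [augTraj]
  | succ n ih =>
    intro h
    have hn : augTraj C Δt τ x n = (τ - n * Δt, x n) :=
      ih fun j hj => h j (hj.trans (Nat.lt_succ_self n))
    have hna : ¬ IsAbsorbing C (augTraj C Δt τ x n) := h n (Nat.lt_succ_self n)
    have hstep : augTraj C Δt τ x (n + 1)
        = ((augTraj C Δt τ x n).1 - Δt, x (n + 1)) := by
      rw [augTraj, if_neg hna]
    rw [hstep, hn, Prod.mk.injEq]
    refine ⟨by push_cast; ring, rfl⟩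

theorem stmt_2 {𝒳 : Type*} (C : Set 𝒳) (Δt τ : ℝ) (hΔt : 0 < Δt) (hτ : 0 ≤ τ)
    (x : ℕ → 𝒳) (hunsafe : ∃ kbar ≤ ⌊τ / Δt⌋₊, x kbar ∉ C) :
    (∀ k : ℕ, reward C Δt (augTraj C Δt τ x k) = 0) ∧
      ∑' k : ℕ, reward C Δt (augTraj C Δt τ x k) = 0 := by
  obtain ⟨kbar, hkbar, hxk⟩ := hunsafe
  have hmain : ∀ k : ℕ, reward C Δt (augTraj C Δt τ x k) = 0 := by
    intro k
    rw [reward, if_neg]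
    rintro ⟨h0, hlt, hna⟩
    -- all earlier states non-absorbing
    have hall : ∀ j ≤ k, ¬ IsAbsorbing C (augTraj C Δt τ x j) := by
      intro j hj ha
      exact hna (absorbing_mono C Δt τ x j k hj ha)
    have heq : augTraj C Δt τ x k = (τ - k * Δt, x k) :=
      augTraj_eq C Δt τ x k fun j hj => hall j hj.le
    rw [heq] at h0 hlt
    simp only at h0 hlt
    -- hence k = ⌊τ/Δt⌋₊
    have hk1 : (k : ℝ) ≤ τ / Δt := by
      rw [le_div_iff₀ hΔt]; linarith
    have hk2 : τ / Δt < k + 1 := by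
      rw [div_lt_iff₀ hΔt]; push_cast; nlinarith
    have hkN : k = ⌊τ / Δt⌋₊ := by
      symm
      rw [Nat.floor_eq_iff (by positivity)]
      exact ⟨hk1, by exact_mod_cast hk2⟩
    -- x kbar ∈ C since state kbar non-absorbing
    have hkb : kbar ≤ k := hkN ▸ hkbar
    have hnab : ¬ IsAbsorbing C (augTraj C Δt τ x kbar) := hall kbar hkb
    have heqb : augTraj C Δt τ x kbar = (τ - kbar * Δt, x kbar) :=
      augTraj_eq C Δt τ x kbar fun j hj => hall j (hj.le.trans hkb)
    rw [heqb] at hnab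
    exact hnab (Or.inr hxk)
  exact ⟨hmain, by simp [hmain]⟩
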